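/- Let c_1, …, c_m be linearly independent vectors in a vector space over the finite field F_q, let E ∈ span{c_1,…,c_m} with E ≠ 0, and let β = (β_1,…,β_m) be chosen uniformly at random from F_q^m. Then the probability that c_1 + β_1 E, …, c_m + β_m E are linearly dependent is at most 1/q. -/

import Mathlib

open scoped Classical

theorem stmt9 {F V : Type*} [Field F] [Fintype F] [AddCommGroup V] [Module F V]
    {m : ℕ} (c : Fin m → V) (hc : LinearIndependent F c)
    (E : V) (hE : E ∈ Submodule.span F (Set.range c)) (hE0 : E ≠ 0) :
    ((Finset.univ.filter
        (fun β : Fin m → F => ¬ LinearIndependent F (fun i => c i + β i • E))).card : ℚ)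
      / (Fintype.card (Fin m → F) : ℚ) ≤ 1 / (Fintype.card F : ℚ) := by
  obtain ⟨ψ, hψE⟩ := (Submodule.mem_span_range_iff_exists_fun F).mp hE
  have hψ0 : ψ ≠ 0 := by
    rintro rfl
    simp only [Pi.zero_apply, zero_smul, Finset.sum_const_zero] at hψE
    exact hE0 hψE.symm
  obtain ⟨i0, hi0⟩ := Function.ne_iff.mp hψ0
  simp only [Pi.zero_apply] at hi0
  set S : (Fin m → F) → F := fun β => ∑ i, ψ i * β i with hS
  -- dependence implies the linear equation
  have key : ∀ β : Fin m → F, ¬ LinearIndependent F (fun i => c i + β i • E) → S β = -1 := by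
    intro β hdep
    obtain ⟨g, hg0, i, hgi⟩ := Fintype.not_linearIndependent_iff.mp hdep
    set t := ∑ j, g j * β j with ht
    have hcomb : ∑ j, (g j + t * ψ j) • c j = 0 := by
      calc ∑ j, (g j + t * ψ j) • c j
          = (∑ j, g j • c j) + t • ∑ j, ψ j • c j := by
            simp [add_smul, Finset.sum_add_distrib, Finset.smul_sum, smul_smul]
        _ = (∑ j, g j • c j) + ∑ j, (g j * β j) • E := by
            rw [hψE, ht, Finset.sum_smul]
        _ = ∑ j, g j • (c j + β j • E) := by
            simp [smul_add, Finset.sum_add_distrib, smul_smul]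
        _ = 0 := hg0
    have hall := Fintype.linearIndependent_iff.mp hc _ hcomb
    have hgj : ∀ j, g j = -(t * ψ j) := fun j =>
      eq_neg_of_add_eq_zero_left (hall j)
    have htne : t ≠ 0 := fun h => hgi (by rw [hgj i, h, zero_mul, neg_zero])
    have ht2 : t = -(t * S β) := by
      nth_rewrite 1 [ht]
      rw [show (∑ j, g j * β j) = ∑ j, -(t * ψ j) * β j from
        Finset.sum_congr rfl fun j _ => by rw [hgj j]]
      simp [hS, Finset.mul_sum, mul_assoc]
    have hts : t * (1 + S β) = 0 := by linear_combination ht2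
    rcases mul_eq_zero.mp hts with h | h
    · exact absurd h htne
    · linear_combination h
  -- fibers of S all have the same cardinality
  have hSadd : ∀ (β : Fin m → F) (x : F), S (β + Pi.single i0 x) = S β + ψ i0 * x := by
    intro β x
    simp only [hS, Pi.add_apply, mul_add, Finset.sum_add_distrib]
    congr 1
    simp [Pi.single_apply, mul_ite]
  have hinv : ∀ (β : Fin m → F) (x y : F),
      (β + Pi.single i0 x) + Pi.single i0 y = β + Pi.single i0 (x + y) := by
    intro β x y
    rw [add_assoc, ← Pi.single_add]
  have hfib : ∀ a b : F, (Finset.univ.filter (fun β => S β = a)).card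
      = (Finset.univ.filter (fun β => S β = b)).card := by
    intro a b
    apply Finset.card_nbij' (i := fun β => β + Pi.single i0 ((b - a) * (ψ i0)⁻¹))
      (j := fun β => β + Pi.single i0 ((a - b) * (ψ i0)⁻¹))
    · intro β hβ
      simp only [Finset.mem_coe, Finset.mem_filter, Finset.mem_univ, true_and] at hβ ⊢
      rw [hSadd, hβ]
      field_simp
      ring
    · intro β hβ
      simp only [Finset.mem_coe, Finset.mem_filter, Finset.mem_univ, true_and] at hβ ⊢
      rw [hSadd, hβ]
      field_simp
      ring
    · intro β _
      beta_reduce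
      rw [hinv]
      simp [← add_mul]
    · intro β _
      beta_reduce
      rw [hinv]
      simp [← add_mul]
  set k := (Finset.univ.filter (fun β : Fin m → F => S β = -1)).card with hk
  have hpart : (Fintype.card (Fin m → F)) = Fintype.card F * k := by
    rw [← Finset.card_univ,
      Finset.card_eq_sum_card_fiberwise (fun β (_ : β ∈ Finset.univ) => Finset.mem_univ (S β))]
    rw [Finset.sum_congr rfl (fun a _ => hfib a (-1))]
    simp [hk, mul_comm]
  have hsub : (Finset.univ.filter
      (fun β : Fin m → F => ¬ LinearIndependent F (fun i => c i + β i • E))).card ≤ k := by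
    apply Finset.card_le_card
    intro β hβ
    simp only [Finset.mem_filter, Finset.mem_univ, true_and] at hβ ⊢
    exact key β hβ
  have hq : (0 : ℚ) < (Fintype.card F : ℚ) := by positivity
  have hN : (0 : ℚ) < (Fintype.card (Fin m → F) : ℚ) := by positivity
  rw [div_le_div_iff₀ hN hq]
  have hd : ((Finset.univ.filter
      (fun β : Fin m → F => ¬ LinearIndependent F (fun i => c i + β i • E))).card : ℚ) ≤ k := by
    exact_mod_cast hsub
  have hpq : (Fintype.card (Fin m → F) : ℚ) = (Fintype.card F : ℚ) * k := by
    exact_mod_cast hpart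
  nlinarith [hq.le]
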